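/- arXiv:2412.06572 — 9 statements merged into one kernel-verified Lean document; each statement's English description precedes it below -/
import Mathlib

section
/- For every κ = (ξ,η) ∈ ℍ², the bracket {κ,κ} = ξ*η − η*ξ is a real multiple of k; moreover {κ,κ} = 0 if and only if κ = (0,0) or κ is a quaternionic spinor. -/
open Quaternion

noncomputable section

/-- The involution `q* = a + bi + cj - dk` on quaternions (Clifford reversion). -/
def qstar (q : ℍ[ℝ]) : ℍ[ℝ] := ⟨q.re, q.imI, q.imJ, -q.imK⟩

/-- The involution `q' = a - bi - cj + dk` on quaternions. -/
def qprime (q : ℍ[ℝ]) : ℍ[ℝ] := ⟨q.re, -q.imI, -q.imJ, q.imK⟩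

/-- A paravector is an element of `ℝ + ℝi + ℝj`, i.e. a quaternion with zero `k`-component. -/
def IsParavector (q : ℍ[ℝ]) : Prop := q.imK = 0

/-- The quaternion `k`. -/
def qk : ℍ[ℝ] := ⟨0, 0, 0, 1⟩

/-- A quaternionic spinor: a pair `(ξ, η) ≠ (0,0)` with `ξ * conj η` a paravector. -/
def IsSpinor (κ : ℍ[ℝ] × ℍ[ℝ]) : Prop := κ ≠ 0 ∧ IsParavector (κ.1 * star κ.2)

/-- The bracket `{κ₁, κ₂} = ξ₁* η₂ − η₁* ξ₂`. -/
def bracket (κ₁ κ₂ : ℍ[ℝ] × ℍ[ℝ]) : ℍ[ℝ] := qstar κ₁.1 * κ₂.2 - qstar κ₁.2 * κ₂.1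

/-- Right multiplication `κ x = (ξ x, η x)`. -/
def rmul (κ : ℍ[ℝ] × ℍ[ℝ]) (x : ℍ[ℝ]) : ℍ[ℝ] × ℍ[ℝ] := (κ.1 * x, κ.2 * x)

/-- The complementary pair `κ̌ = (η', −ξ')`. -/
def qcheck (κ : ℍ[ℝ] × ℍ[ℝ]) : ℍ[ℝ] × ℍ[ℝ] := (qprime κ.2, -qprime κ.1)

/-- The real inner product on `ℍ²`: `⟨κ₁, κ₂⟩ = Re (ξ₁ ξ̄₂ + η₁ η̄₂)`. -/
def qinner (κ₁ κ₂ : ℍ[ℝ] × ℍ[ℝ]) : ℝ := (κ₁.1 * star κ₂.1 + κ₁.2 * star κ₂.2).re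

/-- The squared norm `|κ|² = |ξ|² + |η|²` on `ℍ²`. -/
def qnsq (κ : ℍ[ℝ] × ℍ[ℝ]) : ℝ := Quaternion.normSq κ.1 + Quaternion.normSq κ.2

lemma qstar_re (q : ℍ[ℝ]) : (qstar q).re = q.re := rfl
lemma qstar_imI (q : ℍ[ℝ]) : (qstar q).imI = q.imI := rfl
lemma qstar_imJ (q : ℍ[ℝ]) : (qstar q).imJ = q.imJ := rfl
lemma qstar_imK (q : ℍ[ℝ]) : (qstar q).imK = -q.imK := rfl
lemma qk_re : qk.re = 0 := rfl
lemma qk_imI : qk.imI = 0 := rfl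
lemma qk_imJ : qk.imJ = 0 := rfl
lemma qk_imK : qk.imK = 1 := rfl

lemma bracket_self_eq (κ : ℍ[ℝ] × ℍ[ℝ]) :
    bracket κ κ = (-2 * (κ.1 * star κ.2).imK) • qk := by
  apply Quaternion.ext <;>
    simp [bracket, qstar_re, qstar_imI, qstar_imJ, qstar_imK, qk_re, qk_imI, qk_imJ, qk_imK] <;>
    ring

/-- For every `κ ∈ ℍ²`, the bracket `{κ,κ}` is a real multiple of `k`; moreover
`{κ,κ} = 0` iff `κ = 0` or `κ` is a quaternionic spinor. -/
theorem bracket_self (κ : ℍ[ℝ] × ℍ[ℝ]) :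
    (∃ t : ℝ, bracket κ κ = t • qk) ∧
    (bracket κ κ = 0 ↔ κ = 0 ∨ IsSpinor κ) := by
  refine ⟨⟨_, bracket_self_eq κ⟩, ?_⟩
  rw [bracket_self_eq κ]
  constructor
  · intro hz
    have h : (κ.1 * star κ.2).imK = 0 := by
      have := congrArg (fun q : ℍ[ℝ] => q.imK) hz
      simpa [qk_imK] using this
    by_cases hk : κ = 0
    · exact Or.inl hk
    · exact Or.inr ⟨hk, h⟩
  · rintro (rfl | ⟨_, h⟩)
    · norm_num
    · rw [IsParavector] at h
      rw [h]
      apply Quaternion.ext <;> simp [qk_re, qk_imI, qk_imJ, qk_imK]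
end
end

section
/- Let κ be a quaternionic spinor and ν ∈ ℍ². Then {κ,ν} = 0 if and only if ν = κx for some x ∈ ℍ. -/
open Quaternion

noncomputable section

lemma qstar_eq_zero {q : ℍ[ℝ]} : qstar q = 0 ↔ q = 0 := by
  rw [Quaternion.ext_iff, Quaternion.ext_iff]; simp [qstar]

lemma key (ξ η : ℍ[ℝ]) (h : (ξ * star η).imK = 0) :
    qstar ξ * η = qstar η * ξ := by
  simp only [Quaternion.imK_mul, Quaternion.re_star, Quaternion.imI_star,
    Quaternion.imJ_star, Quaternion.imK_star] at h
  ext <;>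
    simp only [Quaternion.re_mul, Quaternion.imI_mul, Quaternion.imJ_mul,
      Quaternion.imK_mul] <;> simp only [qstar] <;> ring_nf <;> linarith

/-- For a quaternionic spinor `κ` and any `ν ∈ ℍ²`, `{κ,ν} = 0` iff `ν = κ x` for
some quaternion `x`. -/
theorem bracket_eq_zero_iff (κ ν : ℍ[ℝ] × ℍ[ℝ]) (hκ : IsSpinor κ) :
    bracket κ ν = 0 ↔ ∃ x : ℍ[ℝ], ν = rmul κ x := by
  obtain ⟨hne, hp⟩ := hκ
  have hkey := key κ.1 κ.2 hp
  constructor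
  · intro h
    by_cases hξ : κ.1 = 0
    · have hη : κ.2 ≠ 0 := fun h2 => hne (Prod.ext hξ h2)
      have hb : qstar κ.2 * ν.1 = 0 := by
        have : qstar κ.1 * ν.2 - qstar κ.2 * ν.1 = 0 := h
        rw [hξ] at this
        simpa [qstar_eq_zero.mpr rfl] using this
      have hν1 : ν.1 = 0 := by
        rcases mul_eq_zero.mp hb with h1 | h1
        · exact absurd (qstar_eq_zero.mp h1) hη
        · exact h1
      refine ⟨κ.2⁻¹ * ν.2, Prod.ext ?_ ?_⟩
      · simp [rmul, hξ, hν1]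
      · simp [rmul, ← mul_assoc, mul_inv_cancel₀ hη]
    · refine ⟨κ.1⁻¹ * ν.1, Prod.ext ?_ ?_⟩
      · simp [rmul, ← mul_assoc, mul_inv_cancel₀ hξ]
      · have hb : qstar κ.1 * ν.2 = qstar κ.2 * ν.1 := sub_eq_zero.mp h
        have hs : qstar κ.1 ≠ 0 := fun h1 => hξ (qstar_eq_zero.mp h1)
        apply mul_left_cancel₀ hs
        have hx : κ.1 * (κ.1⁻¹ * ν.1) = ν.1 := by
          rw [← mul_assoc, mul_inv_cancel₀ hξ, one_mul]
        show qstar κ.1 * ν.2 = qstar κ.1 * (κ.2 * (κ.1⁻¹ * ν.1))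
        rw [hb, ← mul_assoc, hkey, mul_assoc, hx]
  · rintro ⟨x, rfl⟩
    show qstar κ.1 * (κ.2 * x) - qstar κ.2 * (κ.1 * x) = 0
    rw [← mul_assoc, ← mul_assoc, hkey, sub_self]
end
end

section
/- Let κ = (ξ,η) ∈ ℍ². Then: (i) if κ is a quaternionic spinor then so is κ̌; (ii) for any x,y ∈ ℍ with x ȳ a paravector, ⟨κx, κ̌y⟩ = 0 (in particular ⟨κ, κ̌⟩ = 0); (iii) if κ is a quaternionic spinor then ⟨κx, κ̌y⟩ = 0 for all x,y ∈ ℍ; (iv) {κx, κ̌y} = −x* y |κ|² for all x,y ∈ ℍ (in particular {κ, κ̌} = −|κ|²). -/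
open Quaternion

noncomputable section

lemma qprime_re (q : ℍ[ℝ]) : (qprime q).re = q.re := rfl
lemma qprime_imI (q : ℍ[ℝ]) : (qprime q).imI = -q.imI := rfl
lemma qprime_imJ (q : ℍ[ℝ]) : (qprime q).imJ = -q.imJ := rfl
lemma qprime_imK (q : ℍ[ℝ]) : (qprime q).imK = q.imK := rfl
/-- Key polynomial identity: the inner product factors as
`⟨κx, κ̌y⟩ = -2 (x ȳ).imK (ξ η̄).imK`. -/
lemma qinner_rmul_qcheck (κ : ℍ[ℝ] × ℍ[ℝ]) (x y : ℍ[ℝ]) :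
    qinner (rmul κ x) (rmul (qcheck κ) y)
      = -2 * (x * star y).imK * (κ.1 * star κ.2).imK := by
  simp only [qinner, rmul, qcheck, qprime_re, qprime_imI, qprime_imJ, qprime_imK, Quaternion.re_mul, Quaternion.imI_mul,
    Quaternion.imJ_mul, Quaternion.imK_mul, Quaternion.re_star, Quaternion.imI_star,
    Quaternion.imJ_star, Quaternion.imK_star, Quaternion.re_add, Quaternion.re_neg,
    Quaternion.imI_neg, Quaternion.imJ_neg, Quaternion.imK_neg]
  ring

/-- Properties of the complementary pair `κ̌ = (η', −ξ')`:
(i) if `κ` is a spinor then so is `κ̌`;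
(ii) if `x ȳ` is a paravector then `⟨κx, κ̌y⟩ = 0`;
(iii) if `κ` is a spinor then `⟨κx, κ̌y⟩ = 0` for all `x, y`;
(iv) `{κx, κ̌y} = −x* y |κ|²` for all `x, y`. -/
theorem complementary_spinor_facts (κ : ℍ[ℝ] × ℍ[ℝ]) :
    (IsSpinor κ → IsSpinor (qcheck κ)) ∧
    (∀ x y : ℍ[ℝ], IsParavector (x * star y) → qinner (rmul κ x) (rmul (qcheck κ) y) = 0) ∧
    (IsSpinor κ → ∀ x y : ℍ[ℝ], qinner (rmul κ x) (rmul (qcheck κ) y) = 0) ∧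
    (∀ x y : ℍ[ℝ], bracket (rmul κ x) (rmul (qcheck κ) y) = -(qstar x * y * ((qnsq κ : ℝ) : ℍ[ℝ]))) := by
  refine ⟨?_, ?_, ?_, ?_⟩
  · rintro ⟨hne, hp⟩
    constructor
    · intro h
      apply hne
      have h1 : qprime κ.2 = 0 := congrArg Prod.fst h
      have h2 : -qprime κ.1 = 0 := congrArg Prod.snd h
      have e1 : κ.2 = 0 := by
        simpa [qprime_re, qprime_imI, qprime_imJ, qprime_imK, Quaternion.ext_iff, neg_eq_zero] using h1
      have e2 : κ.1 = 0 := by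
        simpa [qprime_re, qprime_imI, qprime_imJ, qprime_imK, Quaternion.ext_iff, neg_eq_zero] using h2
      exact Prod.ext e2 e1
    · show ((qcheck κ).1 * star (qcheck κ).2).imK = 0
      have : ((qcheck κ).1 * star (qcheck κ).2).imK = (κ.1 * star κ.2).imK := by
        simp only [qcheck, qprime_re, qprime_imI, qprime_imJ, qprime_imK, Quaternion.imK_mul, Quaternion.re_star,
          Quaternion.imI_star, Quaternion.imJ_star, Quaternion.imK_star,
          Quaternion.re_neg, Quaternion.imI_neg, Quaternion.imJ_neg, Quaternion.imK_neg]
        ring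
      rw [this]; exact hp
  · intro x y hp
    rw [qinner_rmul_qcheck]
    rw [show (x * star y).imK = 0 from hp]
    ring
  · rintro ⟨-, hp⟩ x y
    rw [qinner_rmul_qcheck]
    rw [show (κ.1 * star κ.2).imK = 0 from hp]
    ring
  · intro x y
    simp only [bracket, rmul, qcheck, qnsq, Quaternion.normSq_def']
    ext <;>
      simp only [Quaternion.re_mul, Quaternion.imI_mul, Quaternion.imJ_mul,
        Quaternion.imK_mul, Quaternion.re_sub, Quaternion.imI_sub, Quaternion.imJ_sub,
        Quaternion.imK_sub, Quaternion.re_neg, Quaternion.imI_neg, Quaternion.imJ_neg,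
        Quaternion.imK_neg, Quaternion.re_coe, Quaternion.imI_coe, Quaternion.imJ_coe,
        Quaternion.imK_coe, qprime_re, qprime_imI, qprime_imJ, qprime_imK, qstar_re, qstar_imI, qstar_imJ, qstar_imK] <;>
      ring
end
end

section
/- Let κ = (ξ,η) be a quaternionic spinor. Then there exists (α,β) ∈ ℍ² such that exactly one of the two quaternions αξ + βη and αη' − βξ' is zero. -/
open Quaternion

noncomputable section

lemma qprime_mul (a b : ℍ[ℝ]) : qprime (a * b) = qprime a * qprime b := by
  ext <;> simp only [Quaternion.re_mul, Quaternion.imI_mul, Quaternion.imJ_mul, Quaternion.imK_mul] <;> simp [qprime, Quaternion.re_mul, Quaternion.imI_mul, Quaternion.imJ_mul,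
    Quaternion.imK_mul] <;> ring

lemma qprime_qprime (a : ℍ[ℝ]) : qprime (qprime a) = a := by ext <;> simp [qprime]

lemma qprime_zero : qprime (0 : ℍ[ℝ]) = 0 := by ext <;> simp [qprime]

lemma qprime_eq_zero (a : ℍ[ℝ]) : qprime a = 0 ↔ a = 0 := by
  constructor <;> intro h
  · rw [← qprime_qprime a, h, qprime_zero]
  · rw [h, qprime_zero]

lemma qprime_coe (r : ℝ) : qprime ((r : ℍ[ℝ])) = r := by
  ext <;> simp [qprime]

lemma qprime_neg (a : ℍ[ℝ]) : qprime (-a) = -qprime a := by ext <;> simp only [Quaternion.re_neg, Quaternion.imI_neg, Quaternion.imJ_neg, Quaternion.imK_neg] <;> simp [qprime]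

lemma qprime_star (a : ℍ[ℝ]) : qprime (star a) = qstar a := by
  ext <;> simp [qprime, qstar]

lemma key_spinor_id (ξ η : ℍ[ℝ]) (hk : (ξ * star η).imK = 0) :
    qprime η * qstar ξ = ξ * star η := by
  ext
  · rw [Quaternion.re_mul]; simp [qprime, qstar, Quaternion.re_mul]; ring
  · rw [Quaternion.imI_mul]; simp [qprime, qstar, Quaternion.imI_mul]; ring
  · rw [Quaternion.imJ_mul]; simp [qprime, qstar, Quaternion.imJ_mul]; ring
  · rw [Quaternion.imK_mul]
    simp only [qprime, qstar, Quaternion.imK_mul] at *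
    simp at hk ⊢
    nlinarith [hk]

/-- For a quaternionic spinor `κ = (ξ,η)`, there is a row vector `(α,β)` such that
exactly one of `αξ + βη` and `αη' − βξ'` is zero. -/
theorem factorisation_fact (ξ η : ℍ[ℝ]) (h : IsSpinor (ξ, η)) :
    ∃ α β : ℍ[ℝ], Xor' (α * ξ + β * η = 0) (α * qprime η - β * qprime ξ = 0) := by
  obtain ⟨hne, hpar⟩ := h
  have hk : (ξ * star η).imK = 0 := hpar
  by_cases hξ : ξ = 0
  · have hη : η ≠ 0 := by
      intro hη
      exact hne (by simp [hξ, hη, Prod.ext_iff])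
    refine ⟨1, 0, Or.inl ⟨by simp [hξ], ?_⟩⟩
    simp only [one_mul, zero_mul, sub_zero]
    rw [qprime_eq_zero]
    exact hη
  · refine ⟨-(η * star ξ), ((normSq ξ : ℝ) : ℍ[ℝ]), Or.inl ⟨?_, ?_⟩⟩
    · rw [neg_mul, mul_assoc, Quaternion.star_mul_self, Quaternion.coe_commutes]
      exact neg_add_cancel _
    · intro E
      have E2 : η * star ξ * qprime η = -(((normSq ξ : ℝ) : ℍ[ℝ]) * qprime ξ) := by
        have h1 := sub_eq_zero.mp E
        rw [neg_mul] at h1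
        exact neg_eq_iff_eq_neg.mp h1
      have E3 := congrArg qprime E2
      rw [qprime_mul, qprime_mul, qprime_qprime, qprime_star, qprime_neg, qprime_mul,
        qprime_coe, qprime_qprime, key_spinor_id ξ η hk] at E3
      rw [mul_assoc, Quaternion.star_mul_self, ← Quaternion.coe_commutes, ← neg_mul,
        ← Quaternion.coe_neg] at E3
      have E4 := mul_right_cancel₀ hξ E3
      have E5 : (normSq η : ℝ) = -(normSq ξ : ℝ) := Quaternion.coe_injective E4
      have h6 : (normSq ξ : ℝ) ≠ 0 := fun h0 => hξ (Quaternion.normSq_eq_zero.mp h0)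
      have h7 : (0 : ℝ) ≤ normSq η := Quaternion.normSq_nonneg
      have h8 : (0 : ℝ) ≤ normSq ξ := Quaternion.normSq_nonneg
      have : (normSq ξ : ℝ) = 0 := by linarith
      exact h6 this
end
end

section
/- Every nonzero quaternion is a product of finitely many nonzero paravectors; equivalently, the multiplicative subgroup of the group ℍˣ of nonzero quaternions generated by the nonzero paravectors is all of ℍˣ. -/
open Quaternion

noncomputable section

/-- Helper: the paravector `a + b i`. -/
def pvec (a b : ℝ) : ℍ[ℝ] := ⟨a, b, 0, 0⟩

@[simp] lemma pvec_re (a b : ℝ) : (pvec a b).re = a := rfl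
@[simp] lemma pvec_imI (a b : ℝ) : (pvec a b).imI = b := rfl
@[simp] lemma pvec_imJ (a b : ℝ) : (pvec a b).imJ = 0 := rfl
@[simp] lemma pvec_imK (a b : ℝ) : (pvec a b).imK = 0 := rfl

lemma two_paravector_factor (q : ℍ[ℝ]) (hq : q ≠ 0) :
    ∃ v w : ℍ[ℝ], IsParavector v ∧ v ≠ 0 ∧ IsParavector w ∧ w ≠ 0 ∧ v * w = q := by
  by_cases hk : q.imK = 0
  · exact ⟨q, 1, hk, hq, rfl, one_ne_zero, mul_one q⟩
  · set e : ℝ := q.imJ / q.imK with he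
    set n : ℝ := e ^ 2 + 1 with hn
    have hn0 : n ≠ 0 := by positivity
    have hpv : IsParavector (q * pvec e 1) := by
      show (q * pvec e 1).imK = 0
      rw [Quaternion.imK_mul]
      simp only [pvec_re, pvec_imI, pvec_imJ, pvec_imK]
      rw [he, mul_div_cancel₀ _ hk]
      ring
    have hv0 : pvec e 1 ≠ 0 := by
      intro h
      have := congrArg QuaternionAlgebra.imI h
      simp at this
    have hw0 : pvec (e / n) (-1 / n) ≠ 0 := by
      intro h
      have := congrArg QuaternionAlgebra.imI h
      simp at this
      exact hn0 this
    refine ⟨q * pvec e 1, pvec (e / n) (-1 / n), hpv, mul_ne_zero hq hv0, rfl, hw0, ?_⟩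
    rw [mul_assoc]
    have : pvec e 1 * pvec (e / n) (-1 / n) = 1 := by
      ext <;> simp [Quaternion.re_mul, Quaternion.imI_mul, Quaternion.imJ_mul,
        Quaternion.imK_mul] <;> field_simp [hn] <;> ring
    rw [this, mul_one]

/-- Every nonzero quaternion is a product of finitely many nonzero paravectors;
equivalently, the subgroup of `ℍˣ` generated by the nonzero paravectors is all of `ℍˣ`
(the paravector Lipschitz group `$Γ₃` is `ℍˣ`). -/
theorem paravector_lipschitz_group :
    (∀ q : ℍ[ℝ], q ≠ 0 → ∃ L : List ℍ[ℝ], (∀ v ∈ L, IsParavector v ∧ v ≠ 0) ∧ L.prod = q) ∧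
    Subgroup.closure {u : ℍ[ℝ]ˣ | IsParavector (u : ℍ[ℝ])} = ⊤ := by
  have key := two_paravector_factor
  constructor
  · intro q hq
    obtain ⟨v, w, hv, hv0, hw, hw0, hvw⟩ := key q hq
    refine ⟨[v, w], ?_, by simpa using hvw⟩
    intro x hx
    simp only [List.mem_cons, List.not_mem_nil, or_false] at hx
    rcases hx with rfl | rfl
    · exact ⟨hv, hv0⟩
    · exact ⟨hw, hw0⟩
  · rw [Subgroup.eq_top_iff']
    intro u
    obtain ⟨v, w, hv, hv0, hw, hw0, hvw⟩ := key (u : ℍ[ℝ]) (Units.ne_zero u)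
    have : u = Units.mk0 v hv0 * Units.mk0 w hw0 :=
      Units.ext (by simp [hvw])
    rw [this]
    exact mul_mem (Subgroup.subset_closure hv) (Subgroup.subset_closure hw)
end
end

section
/- Let u ∈ ℍ be imaginary (zero real part) and let x be a paravector. Then: (i) uk = −ku*; (ii) xk = k x̄; (iii) the dot product (−uk)·x equals 0 if and only if ux = xu*, and in that case the cross product (−uk) × x equals ux; (iv) if moreover |u| = 1 and ux = xu*, then for every real θ one has exp(uθ) x = x exp(u*θ) = exp(uθ/2) x exp(u*θ/2). -/
open Quaternion

noncomputable section

/-- The dot product of paravectors: `v · w = Re (v w̄)`. -/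
def pdot (v w : ℍ[ℝ]) : ℝ := (v * star w).re

/-- The cross product of paravectors: `v × w = (v w̄ − w v̄) k / 2`. -/
def pcross (v w : ℍ[ℝ]) : ℍ[ℝ] := (2 : ℝ)⁻¹ • ((v * star w - w * star v) * qk)

/-- The quaternionic exponential `exp (u θ) = cos θ + (sin θ) u` for `u` unit imaginary. -/
def qexp (u : ℍ[ℝ]) (θ : ℝ) : ℍ[ℝ] := ((Real.cos θ : ℝ) : ℍ[ℝ]) + Real.sin θ • u

lemma qexp_comm {u x : ℍ[ℝ]} (h : u * x = x * qstar u) (s : ℝ) :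
    qexp u s * x = x * qexp (qstar u) s := by
  unfold qexp
  rw [add_mul, mul_add, smul_mul_assoc, h, mul_smul_comm, Quaternion.coe_commutes]

lemma qexp_sq {u : ℍ[ℝ]} (hu : u.re = 0) (hn : Quaternion.normSq u = 1) (s : ℝ) :
    qexp u s * qexp u s = qexp u (2 * s) := by
  have hn' : u.imI^2 + u.imJ^2 + u.imK^2 = 1 := by
    have := hn; rw [Quaternion.normSq_def'] at this; nlinarith [this]
  ext <;>
    simp [qexp, hu, Quaternion.re_mul, Quaternion.imI_mul, Quaternion.imJ_mul,
      Quaternion.imK_mul, Real.cos_two_mul', Real.sin_two_mul, ← Quaternion.coe_pow] <;>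
    nlinarith [hn', Real.sin_sq_add_cos_sq s]

/-- For `u` imaginary and `x` a paravector:
(i) `uk = −ku*`; (ii) `xk = k x̄`;
(iii) `(−uk)·x = 0` iff `ux = xu*`, and in that case `(−uk) × x = ux`;
(iv) if moreover `|u| = 1` and `ux = xu*` then for every real `θ`,
`exp(uθ) x = x exp(u*θ) = exp(uθ/2) x exp(u*θ/2)`. -/
theorem quaternion_geometry_facts (u x : ℍ[ℝ]) (hu : u.re = 0) (hx : IsParavector x) :
    (u * qk = -(qk * qstar u)) ∧
    (x * qk = qk * star x) ∧
    (pdot (-(u * qk)) x = 0 ↔ u * x = x * qstar u) ∧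
    (u * x = x * qstar u → pcross (-(u * qk)) x = u * x) ∧
    (Quaternion.normSq u = 1 → u * x = x * qstar u → ∀ θ : ℝ,
      qexp u θ * x = x * qexp (qstar u) θ ∧
      qexp u θ * x = qexp u (θ / 2) * x * qexp (qstar u) (θ / 2)) := by
  rw [IsParavector] at hx
  refine ⟨?_, ?_, ?_, ?_, ?_⟩
  · ext <;> simp [qk_re, qk_imI, qk_imJ, qk_imK, qstar_re, qstar_imI, qstar_imJ, qstar_imK, hu, Quaternion.re_mul, Quaternion.imI_mul, Quaternion.imJ_mul,
      Quaternion.imK_mul]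
  · ext <;> simp [qk_re, qk_imI, qk_imJ, qk_imK, hx, Quaternion.re_mul, Quaternion.imI_mul, Quaternion.imJ_mul,
      Quaternion.imK_mul]
  · rw [Quaternion.ext_iff]
    simp only [pdot, qk_re, qk_imI, qk_imJ, qk_imK, qstar_re, qstar_imI, qstar_imJ, qstar_imK, hu, hx, Quaternion.re_mul, Quaternion.imI_mul,
      Quaternion.imJ_mul, Quaternion.imK_mul, Quaternion.re_neg, Quaternion.imI_neg,
      Quaternion.imJ_neg, Quaternion.imK_neg, Quaternion.re_star, Quaternion.imI_star,
      Quaternion.imJ_star, Quaternion.imK_star]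
    constructor
    · intro h; refine ⟨by ring, by ring, by ring, by nlinarith [h]⟩
    · intro h; nlinarith [h.2.2.2]
  · intro h
    have hk : (u * x).imK = (x * qstar u).imK := by rw [h]
    simp only [qstar_re, qstar_imI, qstar_imJ, qstar_imK, hu, hx, Quaternion.imK_mul] at hk
    ext <;>
      simp [pcross, qk_re, qk_imI, qk_imJ, qk_imK, qstar_re, qstar_imI, qstar_imJ, qstar_imK, hu, hx, Quaternion.re_mul, Quaternion.imI_mul,
        Quaternion.imJ_mul, Quaternion.imK_mul, Quaternion.re_smul, Quaternion.imI_smul,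
        Quaternion.imJ_smul, Quaternion.imK_smul] <;>
      nlinarith [hk]
  · intro hn h θ
    refine ⟨qexp_comm h θ, ?_⟩
    rw [mul_assoc, ← qexp_comm h, ← mul_assoc, qexp_sq hu hn,
      show 2 * (θ / 2) = θ by ring]
end
end

section
/- Let a, b, c, d ∈ ℍ be such that (a,c) and (b,d) are quaternionic spinors and a*d − c*b = 1. Then all eight products ab*, cd*, c*a, d*b, ba*, dc*, a*c, b*d are paravectors, and ad* − bc* = da* − cb* = d*a − b*c = 1. In particular, (a*,b*) and (c*,d*) are also quaternionic spinors. -/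
open Quaternion

noncomputable section

lemma qstar_mul (p q : ℍ[ℝ]) : qstar (p * q) = qstar q * qstar p := by
  ext <;> simp [qstar_re, qstar_imI, qstar_imJ, qstar_imK, Quaternion.re_mul, Quaternion.imI_mul, Quaternion.imJ_mul,
    Quaternion.imK_mul] <;> ring

lemma qstar_zero : qstar (0 : ℍ[ℝ]) = 0 := by ext <;> simp [qstar]

lemma qstar_one : qstar (1 : ℍ[ℝ]) = 1 := by ext <;> simp [qstar]

lemma qstar_sub (p q : ℍ[ℝ]) : qstar (p - q) = qstar p - qstar q := by
  ext <;> simp [qstar_re, qstar_imI, qstar_imJ, qstar_imK] <;> ring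

lemma qstar_qstar (q : ℍ[ℝ]) : qstar (qstar q) = q := by ext <;> simp [qstar]

lemma isPara_of_qstar_eq {q : ℍ[ℝ]} (h : qstar q = q) : IsParavector q := by
  have h2 : -q.imK = q.imK := congrArg QuaternionAlgebra.imK h
  unfold IsParavector; linarith

lemma para_swap {p q : ℍ[ℝ]} (h : IsParavector (p * star q)) :
    qstar p * q = qstar q * p := by
  unfold IsParavector at h
  simp only [Quaternion.imK_mul, Quaternion.re_star, Quaternion.imI_star,
    Quaternion.imJ_star, Quaternion.imK_star] at h
  ext <;> simp only [qstar_re, qstar_imI, qstar_imJ, qstar_imK, Quaternion.re_mul, Quaternion.imI_mul, Quaternion.imJ_mul,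
    Quaternion.imK_mul] <;> ring_nf <;> try ring
  · linarith

lemma para_star_qstar {p q : ℍ[ℝ]} (h : IsParavector (p * qstar q)) :
    IsParavector (qstar p * star (qstar q)) := by
  unfold IsParavector at h ⊢
  simp only [qstar_re, qstar_imI, qstar_imJ, qstar_imK, Quaternion.imK_mul, Quaternion.re_star, Quaternion.imI_star,
    Quaternion.imJ_star, Quaternion.imK_star] at h ⊢
  linarith

/-- Left multiplication by the matrix `[[a,b],[c,d]]`, as an `ℝ`-linear map on `ℍ²`. -/
def Lmap (a b c d : ℍ[ℝ]) : (ℍ[ℝ] × ℍ[ℝ]) →ₗ[ℝ] (ℍ[ℝ] × ℍ[ℝ]) where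
  toFun p := (a * p.1 + b * p.2, c * p.1 + d * p.2)
  map_add' p q := by
    simp only [Prod.fst_add, Prod.snd_add, mul_add, Prod.mk_add_mk, Prod.mk.injEq]
    constructor <;> abel
  map_smul' r p := by
    simp only [Prod.smul_fst, Prod.smul_snd, RingHom.id_apply, Prod.smul_mk,
      mul_smul_comm, smul_add]

/-- If `(a,c)` and `(b,d)` are quaternionic spinors with `a*d − c*b = 1`, then all eight
products `ab*, cd*, c*a, d*b, ba*, dc*, a*c, b*d` are paravectors,
`ad* − bc* = da* − cb* = d*a − b*c = 1`, and `(a*,b*)` and `(c*,d*)` are spinors. -/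
theorem clifford_matrix_conditions (a b c d : ℍ[ℝ])
    (h1 : IsSpinor (a, c)) (h2 : IsSpinor (b, d))
    (h3 : qstar a * d - qstar c * b = 1) :
    (IsParavector (a * qstar b) ∧ IsParavector (c * qstar d) ∧
     IsParavector (qstar c * a) ∧ IsParavector (qstar d * b) ∧
     IsParavector (b * qstar a) ∧ IsParavector (d * qstar c) ∧
     IsParavector (qstar a * c) ∧ IsParavector (qstar b * d)) ∧
    (a * qstar d - b * qstar c = 1 ∧ d * qstar a - c * qstar b = 1 ∧
     qstar d * a - qstar b * c = 1) ∧
    (IsSpinor (qstar a, qstar b) ∧ IsSpinor (qstar c, qstar d)) := by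
  obtain ⟨-, hac⟩ := h1
  obtain ⟨-, hbd⟩ := h2
  have e3 : qstar a * c = qstar c * a := para_swap hac
  have e2 : qstar b * d = qstar d * b := para_swap hbd
  have e1 : qstar d * a - qstar b * c = 1 := by
    have h := congrArg qstar h3
    rwa [qstar_sub, qstar_mul, qstar_mul, qstar_qstar, qstar_qstar, qstar_one] at h
  set f := Lmap a b c d with hf
  set g := Lmap (qstar d) (-(qstar b)) (-(qstar c)) (qstar a) with hg
  have hgf : g * f = 1 := by
    apply LinearMap.ext
    rintro ⟨x, y⟩
    rw [Module.End.mul_apply]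
    show (_, _) = (x, y)
    simp only [hf, hg, Lmap, LinearMap.coe_mk, AddHom.coe_mk]
    refine Prod.ext ?_ ?_
    · show qstar d * (a * x + b * y) + -(qstar b) * (c * x + d * y) = x
      have key : qstar d * (a * x + b * y) + -(qstar b) * (c * x + d * y)
          = (qstar d * a - qstar b * c) * x + (qstar d * b - qstar b * d) * y := by
        noncomm_ring
      rw [key, e1, sub_eq_zero.mpr e2.symm]
      simp
    · show -(qstar c) * (a * x + b * y) + qstar a * (c * x + d * y) = y
      have key : -(qstar c) * (a * x + b * y) + qstar a * (c * x + d * y)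
          = (qstar a * c - qstar c * a) * x + (qstar a * d - qstar c * b) * y := by
        noncomm_ring
      rw [key, h3, sub_eq_zero.mpr e3]
      simp
  have hfg : f * g = 1 := mul_eq_one_comm.mpr hgf
  have h10 := LinearMap.ext_iff.mp hfg (1, 0)
  have h01 := LinearMap.ext_iff.mp hfg (0, 1)
  rw [Module.End.mul_apply, Module.End.one_apply] at h10 h01
  simp only [hf, hg, Lmap, LinearMap.coe_mk, AddHom.coe_mk, mul_one, mul_zero,
    add_zero, zero_add, neg_zero, mul_neg, neg_mul, Prod.mk.injEq] at h10 h01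
  obtain ⟨F1, F3⟩ := h10
  obtain ⟨F2, F4⟩ := h01
  have P1 : a * qstar b = b * qstar a := by
    rw [add_comm, ← sub_eq_add_neg, sub_eq_zero] at F2; exact F2.symm
  have P2 : c * qstar d = d * qstar c := by
    rw [← sub_eq_add_neg, sub_eq_zero] at F3; exact F3
  have det1 : a * qstar d - b * qstar c = 1 := by rwa [← sub_eq_add_neg] at F1
  have det2 : d * qstar a - c * qstar b = 1 := by
    rwa [add_comm, ← sub_eq_add_neg] at F4
  have pab : IsParavector (a * qstar b) :=
    isPara_of_qstar_eq (by rw [qstar_mul, qstar_qstar]; exact P1.symm)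
  have pcd : IsParavector (c * qstar d) :=
    isPara_of_qstar_eq (by rw [qstar_mul, qstar_qstar]; exact P2.symm)
  refine ⟨⟨pab, pcd,
      isPara_of_qstar_eq (by rw [qstar_mul, qstar_qstar]; exact e3),
      isPara_of_qstar_eq (by rw [qstar_mul, qstar_qstar]; exact e2),
      isPara_of_qstar_eq (by rw [qstar_mul, qstar_qstar]; exact P1),
      isPara_of_qstar_eq (by rw [qstar_mul, qstar_qstar]; exact P2),
      isPara_of_qstar_eq (by rw [qstar_mul, qstar_qstar]; exact e3.symm),
      isPara_of_qstar_eq (by rw [qstar_mul, qstar_qstar]; exact e2.symm)⟩,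
    ⟨det1, det2, e1⟩, ⟨?_, para_star_qstar pab⟩, ⟨?_, para_star_qstar pcd⟩⟩
  · intro h
    rw [Prod.ext_iff] at h
    obtain ⟨ha, hb⟩ := h
    have ha' : a = 0 := by rw [← qstar_qstar a, show qstar a = 0 from ha]; ext <;> simp [qstar]
    have hb' : b = 0 := by rw [← qstar_qstar b, show qstar b = 0 from hb]; ext <;> simp [qstar]
    rw [ha', hb'] at h3
    simp [qstar_zero] at h3
  · intro h
    rw [Prod.ext_iff] at h
    obtain ⟨hc, hd⟩ := h
    have hc' : c = 0 := by rw [← qstar_qstar c, show qstar c = 0 from hc]; ext <;> simp [qstar]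
    have hd' : d = 0 := by rw [← qstar_qstar d, show qstar d = 0 from hd]; ext <;> simp [qstar]
    rw [hc', hd'] at h3
    simp [qstar_zero] at h3
end
end

section
/- If A ∈ SL₂$ is a Clifford matrix and κ is a quaternionic spinor, then the matrix-vector product Aκ is again a quaternionic spinor. Moreover the action is transitive: for any two quaternionic spinors κ₁, κ₂ there exists A ∈ SL₂$ with Aκ₁ = κ₂. -/
open Quaternion

noncomputable section

/-- The pseudo-determinant of a 2×2 quaternionic matrix: `pdet [[a,b],[c,d]] = a* d − c* b`. -/
def pdet (A : Matrix (Fin 2) (Fin 2) ℍ[ℝ]) : ℍ[ℝ] := qstar (A 0 0) * A 1 1 - qstar (A 1 0) * A 0 1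

/-- A Clifford matrix: columns are quaternionic spinors and the pseudo-determinant is 1. -/
def IsClifford (A : Matrix (Fin 2) (Fin 2) ℍ[ℝ]) : Prop :=
  IsSpinor (A 0 0, A 1 0) ∧ IsSpinor (A 0 1, A 1 1) ∧ pdet A = 1

/-- Matrix-vector action of a 2×2 quaternionic matrix on a column vector in `ℍ²`. -/
def mact (A : Matrix (Fin 2) (Fin 2) ℍ[ℝ]) (κ : ℍ[ℝ] × ℍ[ℝ]) : ℍ[ℝ] × ℍ[ℝ] :=
  (A 0 0 * κ.1 + A 0 1 * κ.2, A 1 0 * κ.1 + A 1 1 * κ.2)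


namespace CliffordAux


@[simp] lemma qstar_re (q : ℍ[ℝ]) : (qstar q).re = q.re := rfl
@[simp] lemma qstar_imI (q : ℍ[ℝ]) : (qstar q).imI = q.imI := rfl
@[simp] lemma qstar_imJ (q : ℍ[ℝ]) : (qstar q).imJ = q.imJ := rfl
@[simp] lemma qstar_imK (q : ℍ[ℝ]) : (qstar q).imK = -q.imK := rfl
@[simp] lemma qprime_re (q : ℍ[ℝ]) : (qprime q).re = q.re := rfl
@[simp] lemma qprime_imI (q : ℍ[ℝ]) : (qprime q).imI = -q.imI := rfl
@[simp] lemma qprime_imJ (q : ℍ[ℝ]) : (qprime q).imJ = -q.imJ := rfl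
@[simp] lemma qprime_imK (q : ℍ[ℝ]) : (qprime q).imK = q.imK := rfl

lemma qstar_mul (x y : ℍ[ℝ]) : qstar (x * y) = qstar y * qstar x := by
  ext <;> simp [Quaternion.re_mul, Quaternion.imI_mul, Quaternion.imJ_mul, Quaternion.imK_mul]
    <;> ring

lemma qstar_one : qstar (1 : ℍ[ℝ]) = 1 := by ext <;> simp
lemma qstar_zero : qstar (0 : ℍ[ℝ]) = 0 := by ext <;> simp
lemma qstar_qstar (x : ℍ[ℝ]) : qstar (qstar x) = x := by ext <;> simp
lemma qstar_neg (x : ℍ[ℝ]) : qstar (-x) = -qstar x := by ext <;> simp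
lemma qstar_sub (x y : ℍ[ℝ]) : qstar (x - y) = qstar x - qstar y := by ext <;> simp <;> ring
lemma qstar_add (x y : ℍ[ℝ]) : qstar (x + y) = qstar x + qstar y := by ext <;> simp <;> ring

lemma qstar_ne_zero {x : ℍ[ℝ]} (h : x ≠ 0) : qstar x ≠ 0 := fun h0 => h (by
  have := congrArg qstar h0
  rwa [qstar_qstar, qstar_zero] at this)

lemma qstar_inv (x : ℍ[ℝ]) (h : x ≠ 0) : qstar x⁻¹ = (qstar x)⁻¹ :=
  eq_inv_of_mul_eq_one_left (by rw [← qstar_mul, mul_inv_cancel₀ h, qstar_one])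

lemma qstar_para {q : ℍ[ℝ]} (h : q.imK = 0) : qstar q = q := by ext <;> simp [h]

lemma star_qstar (q : ℍ[ℝ]) : star (qstar q) = qprime q := by ext <;> simp

lemma qcomm_of {x y : ℍ[ℝ]} (h : (x * star y).imK = 0) : qstar x * y = qstar y * x := by
  simp only [Quaternion.imK_mul, Quaternion.re_star, Quaternion.imI_star, Quaternion.imJ_star,
    Quaternion.imK_star] at h
  ext <;> simp only [Quaternion.re_mul, Quaternion.imI_mul, Quaternion.imJ_mul,
    Quaternion.imK_mul, qstar_re, qstar_imI, qstar_imJ, qstar_imK]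
  · ring
  · ring
  · ring
  · linear_combination (-2:ℝ) * h

lemma conj_para (x v : ℍ[ℝ]) :
    (star x * v * qprime x).imK = (x.re^2 + x.imI^2 + x.imJ^2 + x.imK^2) * v.imK := by
  simp only [Quaternion.re_mul, Quaternion.imI_mul, Quaternion.imJ_mul, Quaternion.imK_mul,
    Quaternion.re_star, Quaternion.imI_star, Quaternion.imJ_star, Quaternion.imK_star,
    qprime_re, qprime_imI, qprime_imJ, qprime_imK]
  ring

lemma coe_mul_imK (r : ℝ) (y : ℍ[ℝ]) : ((r : ℍ[ℝ]) * y).imK = r * y.imK := by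
  simp

lemma mul_coe_imK (y : ℍ[ℝ]) (r : ℝ) : (y * (r : ℍ[ℝ])).imK = y.imK * r := by
  simp [Quaternion.imK_mul]

lemma key_para {a b c d x y : ℍ[ℝ]} (h1 : (a * star c).imK = 0) (h2 : (b * star d).imK = 0)
    (h3 : qstar a * d - qstar c * b = 1) (h4 : (x * star y).imK = 0) :
    ((a * x + b * y) * star (c * x + d * y)).imK = 0 := by
  have h3re := congrArg QuaternionAlgebra.re h3
  have h3i := congrArg QuaternionAlgebra.imI h3
  have h3j := congrArg QuaternionAlgebra.imJ h3
  have h3k := congrArg QuaternionAlgebra.imK h3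
  simp only [Quaternion.re_mul, Quaternion.imI_mul, Quaternion.imJ_mul, Quaternion.imK_mul,
    Quaternion.re_star, Quaternion.imI_star, Quaternion.imJ_star, Quaternion.imK_star,
    Quaternion.re_add, Quaternion.imI_add, Quaternion.imJ_add, Quaternion.imK_add,
    Quaternion.re_sub, Quaternion.imI_sub, Quaternion.imJ_sub, Quaternion.imK_sub,
    Quaternion.re_one, Quaternion.imI_one, Quaternion.imJ_one, Quaternion.imK_one,
    qstar_re, qstar_imI, qstar_imJ, qstar_imK] at h1 h2 h3re h3i h3j h3k h4 ⊢
  linear_combination (x.re^2 + x.imI^2 + x.imJ^2 + x.imK^2) * h1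
    + (y.re^2 + y.imI^2 + y.imJ^2 + y.imK^2) * h2 + h4
    + (-x.re*y.imK - x.imI*y.imJ + x.imJ*y.imI + x.imK*y.re) * h3re
    + (-x.re*y.imJ + x.imI*y.imK + x.imJ*y.re - x.imK*y.imI) * h3i
    - (-x.re*y.imI + x.imI*y.re - x.imJ*y.imK + x.imK*y.imJ) * h3j
    - (x.re*y.re + x.imI*y.imI + x.imJ*y.imJ + x.imK*y.imK) * h3k



lemma spinor_mact (A : Matrix (Fin 2) (Fin 2) ℍ[ℝ]) (κ : ℍ[ℝ] × ℍ[ℝ])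
    (hA : IsClifford A) (hκ : IsSpinor κ) : IsSpinor (mact A κ) := by
  obtain ⟨⟨hc1ne, hc1p⟩, ⟨hc2ne, hc2p⟩, hp⟩ := hA
  obtain ⟨hκne, hκp⟩ := hκ
  have h1 : (A 0 0 * star (A 1 0)).imK = 0 := hc1p
  have h2 : (A 0 1 * star (A 1 1)).imK = 0 := hc2p
  have hp' : qstar (A 0 0) * A 1 1 - qstar (A 1 0) * A 0 1 = 1 := hp
  constructor
  · -- nonzero
    intro h0
    have e1 : A 0 0 * κ.1 + A 0 1 * κ.2 = 0 := congrArg Prod.fst h0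
    have e2 : A 1 0 * κ.1 + A 1 1 * κ.2 = 0 := congrArg Prod.snd h0
    have r1 : qstar (A 1 1) * A 0 0 - qstar (A 0 1) * A 1 0 = 1 := by
      have := congrArg qstar hp'
      rwa [qstar_sub, qstar_mul, qstar_mul, qstar_qstar, qstar_qstar, qstar_one] at this
    have r2 : qstar (A 0 1) * A 1 1 = qstar (A 1 1) * A 0 1 := qcomm_of h2
    have r3 : qstar (A 0 0) * A 1 0 = qstar (A 1 0) * A 0 0 := qcomm_of h1
    have hx : κ.1 = 0 := by
      have : κ.1 = qstar (A 1 1) * (A 0 0 * κ.1 + A 0 1 * κ.2)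
          - qstar (A 0 1) * (A 1 0 * κ.1 + A 1 1 * κ.2) := by
        have expand : qstar (A 1 1) * (A 0 0 * κ.1 + A 0 1 * κ.2)
            - qstar (A 0 1) * (A 1 0 * κ.1 + A 1 1 * κ.2)
            = (qstar (A 1 1) * A 0 0 - qstar (A 0 1) * A 1 0) * κ.1
              + (qstar (A 1 1) * A 0 1 - qstar (A 0 1) * A 1 1) * κ.2 := by noncomm_ring
        rw [expand, r1, ← r2, sub_self, one_mul, zero_mul, add_zero]
      rw [this, e1, e2, mul_zero, mul_zero, sub_zero]
    have hy : κ.2 = 0 := by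
      have : κ.2 = qstar (A 0 0) * (A 1 0 * κ.1 + A 1 1 * κ.2)
          - qstar (A 1 0) * (A 0 0 * κ.1 + A 0 1 * κ.2) := by
        have expand : qstar (A 0 0) * (A 1 0 * κ.1 + A 1 1 * κ.2)
            - qstar (A 1 0) * (A 0 0 * κ.1 + A 0 1 * κ.2)
            = (qstar (A 0 0) * A 1 0 - qstar (A 1 0) * A 0 0) * κ.1
              + (qstar (A 0 0) * A 1 1 - qstar (A 1 0) * A 0 1) * κ.2 := by noncomm_ring
        rw [expand, hp', r3, sub_self, one_mul, zero_mul, zero_add]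
      rw [this, e1, e2, mul_zero, mul_zero, sub_zero]
    exact hκne (Prod.ext hx hy)
  · exact key_para h1 h2 hp' hκp

lemma mul_entry (A B : Matrix (Fin 2) (Fin 2) ℍ[ℝ]) (i j : Fin 2) :
    (A * B) i j = A i 0 * B 0 j + A i 1 * B 1 j := by
  simp [Matrix.mul_apply, Fin.sum_univ_two]

lemma mact_mul (A B : Matrix (Fin 2) (Fin 2) ℍ[ℝ]) (κ : ℍ[ℝ] × ℍ[ℝ]) :
    mact (A * B) κ = mact A (mact B κ) := by
  simp only [mact, mul_entry]
  exact Prod.ext (by noncomm_ring) (by noncomm_ring)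

lemma mul_clifford {A B : Matrix (Fin 2) (Fin 2) ℍ[ℝ]} (hA : IsClifford A) (hB : IsClifford B) :
    IsClifford (A * B) := by
  have h1 : (A 0 0 * star (A 1 0)).imK = 0 := hA.1.2
  have h2 : (A 0 1 * star (A 1 1)).imK = 0 := hA.2.1.2
  have hp' : qstar (A 0 0) * A 1 1 - qstar (A 1 0) * A 0 1 = 1 := hA.2.2
  have r1 : qstar (A 1 1) * A 0 0 - qstar (A 0 1) * A 1 0 = 1 := by
    have := congrArg qstar hp'
    rwa [qstar_sub, qstar_mul, qstar_mul, qstar_qstar, qstar_qstar, qstar_one] at this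
  refine ⟨?_, ?_, ?_⟩
  · have : IsSpinor (mact A (B 0 0, B 1 0)) := spinor_mact A _ hA hB.1
    rw [mul_entry, mul_entry]
    exact this
  · have : IsSpinor (mact A (B 0 1, B 1 1)) := spinor_mact A _ hA hB.2.1
    rw [mul_entry, mul_entry]
    exact this
  · show qstar ((A*B) 0 0) * (A*B) 1 1 - qstar ((A*B) 1 0) * (A*B) 0 1 = 1
    rw [mul_entry, mul_entry, mul_entry, mul_entry]
    have r3' : qstar (A 0 0) * A 1 0 - qstar (A 1 0) * A 0 0 = 0 :=
      sub_eq_zero.2 (qcomm_of h1)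
    have r2' : qstar (A 0 1) * A 1 1 - qstar (A 1 1) * A 0 1 = 0 :=
      sub_eq_zero.2 (qcomm_of h2)
    have e3 : qstar (A 0 0) * A 1 1 - qstar (A 1 0) * A 0 1 - 1 = 0 := sub_eq_zero.2 hp'
    have e4 : qstar (A 0 1) * A 1 0 - qstar (A 1 1) * A 0 0 + 1 = 0 := by
      have := congrArg Neg.neg r1
      rw [neg_sub] at this
      rw [sub_eq_add_neg] at this ⊢
      rw [this]
      simp
    have key : qstar (A 0 0 * B 0 0 + A 0 1 * B 1 0) * (A 1 0 * B 0 1 + A 1 1 * B 1 1)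
        - qstar (A 1 0 * B 0 0 + A 1 1 * B 1 0) * (A 0 0 * B 0 1 + A 0 1 * B 1 1)
        = qstar (B 0 0) * B 1 1 - qstar (B 1 0) * B 0 1
          + (qstar (B 0 0) * ((qstar (A 0 0) * A 1 0 - qstar (A 1 0) * A 0 0) * B 0 1)
          + qstar (B 1 0) * ((qstar (A 0 1) * A 1 1 - qstar (A 1 1) * A 0 1) * B 1 1)
          + qstar (B 0 0) * ((qstar (A 0 0) * A 1 1 - qstar (A 1 0) * A 0 1 - 1) * B 1 1)
          + qstar (B 1 0) * ((qstar (A 0 1) * A 1 0 - qstar (A 1 1) * A 0 0 + 1) * B 0 1)) := by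
      rw [qstar_add, qstar_add, qstar_mul, qstar_mul, qstar_mul, qstar_mul]
      noncomm_ring
    rw [key, r3', r2', e3, e4]
    simp only [zero_mul, mul_zero, add_zero]
    exact hB.2.2

lemma conj_para' (x : ℍ[ℝ]) {v : ℍ[ℝ]} (hv : v.imK = 0) :
    (star x * v * qprime x).imK = 0 := by
  rw [conj_para, hv, mul_zero]

lemma to_std (κ : ℍ[ℝ] × ℍ[ℝ]) (hκ : IsSpinor κ) :
    ∃ S : Matrix (Fin 2) (Fin 2) ℍ[ℝ], IsClifford S ∧ mact S κ = (1, 0) := by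
  obtain ⟨hne, hpara⟩ := hκ
  have hpara' : (κ.1 * star κ.2).imK = 0 := hpara
  by_cases hη : κ.2 = 0
  · have hξ : κ.1 ≠ 0 := fun h => hne (Prod.ext h hη)
    refine ⟨!![κ.1⁻¹, 0; 0, qstar κ.1], ⟨⟨?_, ?_⟩, ⟨?_, ?_⟩, ?_⟩, ?_⟩
    · exact fun h => inv_ne_zero hξ (congrArg Prod.fst h)
    · show ((κ.1⁻¹ : ℍ[ℝ]) * star (0 : ℍ[ℝ])).imK = 0
      simp
    · exact fun h => qstar_ne_zero hξ (congrArg Prod.snd h)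
    · show ((0 : ℍ[ℝ]) * star (qstar κ.1)).imK = 0
      simp
    · show qstar (κ.1⁻¹) * qstar κ.1 - qstar (0 : ℍ[ℝ]) * (0 : ℍ[ℝ]) = 1
      rw [qstar_inv _ hξ, inv_mul_cancel₀ (qstar_ne_zero hξ), mul_zero, sub_zero]
    · show (κ.1⁻¹ * κ.1 + 0 * κ.2, 0 * κ.1 + qstar κ.1 * κ.2) = ((1 : ℍ[ℝ]), (0 : ℍ[ℝ]))
      rw [inv_mul_cancel₀ hξ, hη, zero_mul, mul_zero, add_zero, zero_mul, zero_add]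
  · set n := normSq κ.2 with hn
    have hn0 : n ≠ 0 := normSq_ne_zero.2 hη
    set p := (n⁻¹ : ℝ) • (κ.1 * star κ.2) with hpdef
    have hpk : p.imK = 0 := by rw [hpdef]; simp [hpara']
    have hp : p * κ.2 = κ.1 := by
      rw [hpdef, smul_mul_assoc, mul_assoc, star_mul_self, ← hn, mul_coe_eq_smul,
        smul_smul, inv_mul_cancel₀ hn0, one_smul]
    have hinv : κ.2⁻¹ = ((n⁻¹ : ℝ) : ℍ[ℝ]) * star κ.2 := by
      rw [inv_def, coe_mul_eq_smul, hn]
    refine ⟨!![κ.2⁻¹, -(κ.2⁻¹ * (p - 1)); -(qstar κ.2), qstar κ.2 * p], ⟨⟨?_, ?_⟩, ⟨?_, ?_⟩, ?_⟩, ?_⟩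
    · exact fun h => inv_ne_zero hη (congrArg Prod.fst h)
    · show (κ.2⁻¹ * star (-(qstar κ.2))).imK = 0
      have e : κ.2⁻¹ * star (-(qstar κ.2))
          = -(((n⁻¹ : ℝ) : ℍ[ℝ]) * (star κ.2 * 1 * qprime κ.2)) := by
        rw [star_neg, star_qstar, hinv]
        noncomm_ring
      rw [e, imK_neg, coe_mul_imK, conj_para' _ (by simp), mul_zero, neg_zero]
    · intro h0
      have h02 : qstar κ.2 * p = 0 := congrArg Prod.snd h0
      have hp0 : p = 0 := by
        rcases mul_eq_zero.1 h02 with h | h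
        · exact absurd h (qstar_ne_zero hη)
        · exact h
      have h01 : -(κ.2⁻¹ * (p - 1)) = 0 := congrArg Prod.fst h0
      rw [hp0, zero_sub, mul_neg_one, neg_neg] at h01
      exact inv_ne_zero hη h01
    · show ((-(κ.2⁻¹ * (p - 1))) * star (qstar κ.2 * p)).imK = 0
      have hv : ((p - 1) * star p).imK = 0 := by
        simp only [Quaternion.imK_mul, Quaternion.re_star, Quaternion.imI_star,
          Quaternion.imJ_star, Quaternion.imK_star, Quaternion.re_sub, Quaternion.imI_sub,
          Quaternion.imJ_sub, Quaternion.imK_sub, Quaternion.re_one, Quaternion.imI_one,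
          Quaternion.imJ_one, Quaternion.imK_one]
        linear_combination hpk
      have e : (-(κ.2⁻¹ * (p - 1))) * star (qstar κ.2 * p)
          = -(((n⁻¹ : ℝ) : ℍ[ℝ]) * (star κ.2 * ((p - 1) * star p) * qprime κ.2)) := by
        rw [star_mul, star_qstar, hinv]
        noncomm_ring
      rw [e, imK_neg, coe_mul_imK, conj_para' _ hv, mul_zero, neg_zero]
    · show qstar (κ.2⁻¹) * (qstar κ.2 * p) - qstar (-(qstar κ.2)) * (-(κ.2⁻¹ * (p - 1))) = 1
      rw [qstar_inv _ hη, qstar_neg, qstar_qstar, neg_mul_neg,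
        inv_mul_cancel_left₀ (qstar_ne_zero hη), mul_inv_cancel_left₀ hη]
      exact sub_sub_cancel p 1
    · show (κ.2⁻¹ * κ.1 + (-(κ.2⁻¹ * (p - 1))) * κ.2,
          (-(qstar κ.2)) * κ.1 + (qstar κ.2 * p) * κ.2) = ((1 : ℍ[ℝ]), (0 : ℍ[ℝ]))
      refine Prod.ext ?_ ?_
      · show κ.2⁻¹ * κ.1 + (-(κ.2⁻¹ * (p - 1))) * κ.2 = 1
        rw [← hp]
        have : κ.2⁻¹ * (p * κ.2) + (-(κ.2⁻¹ * (p - 1))) * κ.2 = κ.2⁻¹ * κ.2 := by noncomm_ring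
        rw [this, inv_mul_cancel₀ hη]
      · show (-(qstar κ.2)) * κ.1 + (qstar κ.2 * p) * κ.2 = 0
        rw [← hp]
        noncomm_ring

lemma from_std (κ : ℍ[ℝ] × ℍ[ℝ]) (hκ : IsSpinor κ) :
    ∃ T : Matrix (Fin 2) (Fin 2) ℍ[ℝ], IsClifford T ∧ mact T (1, 0) = κ := by
  obtain ⟨hne, hpara⟩ := hκ
  have hpara' : (κ.1 * star κ.2).imK = 0 := hpara
  by_cases hη : κ.2 = 0
  · have hξ : κ.1 ≠ 0 := fun h => hne (Prod.ext h hη)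
    refine ⟨!![κ.1, 0; 0, (qstar κ.1)⁻¹], ⟨⟨?_, ?_⟩, ⟨?_, ?_⟩, ?_⟩, ?_⟩
    · exact fun h => hξ (congrArg Prod.fst h)
    · show (κ.1 * star (0 : ℍ[ℝ])).imK = 0
      simp
    · exact fun h => inv_ne_zero (qstar_ne_zero hξ) (congrArg Prod.snd h)
    · show ((0 : ℍ[ℝ]) * star ((qstar κ.1)⁻¹)).imK = 0
      simp
    · show qstar κ.1 * (qstar κ.1)⁻¹ - qstar (0 : ℍ[ℝ]) * (0 : ℍ[ℝ]) = 1
      rw [mul_inv_cancel₀ (qstar_ne_zero hξ), mul_zero, sub_zero]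
    · show (κ.1 * 1 + 0 * 0, 0 * 1 + (qstar κ.1)⁻¹ * 0) = κ
      rw [mul_one, mul_zero, add_zero, zero_mul, mul_zero, add_zero]
      exact Prod.ext rfl hη.symm
  · set n := normSq κ.2 with hn
    have hn0 : n ≠ 0 := normSq_ne_zero.2 hη
    set p := (n⁻¹ : ℝ) • (κ.1 * star κ.2) with hpdef
    have hpk : p.imK = 0 := by rw [hpdef]; simp [hpara']
    have hp : p * κ.2 = κ.1 := by
      rw [hpdef, smul_mul_assoc, mul_assoc, star_mul_self, ← hn, mul_coe_eq_smul,
        smul_smul, inv_mul_cancel₀ hn0, one_smul]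
    set s := (qstar κ.2)⁻¹ with hsdef
    have hs0 : s ≠ 0 := inv_ne_zero (qstar_ne_zero hη)
    refine ⟨!![κ.1, (p - 1) * s; κ.2, s], ⟨⟨?_, ?_⟩, ⟨?_, ?_⟩, ?_⟩, ?_⟩
    · exact fun h => hne (Prod.ext (congrArg Prod.fst h) (congrArg Prod.snd h))
    · exact hpara'
    · exact fun h => hs0 (congrArg Prod.snd h)
    · show ((p - 1) * s * star s).imK = 0
      rw [mul_assoc, self_mul_star, mul_coe_imK]
      have : (p - 1).imK = 0 := by
        rw [Quaternion.imK_sub, hpk, Quaternion.imK_one, sub_zero]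
      rw [this, zero_mul]
    · show qstar κ.1 * s - qstar κ.2 * ((p - 1) * s) = 1
      have hqξ : qstar κ.1 = qstar κ.2 * p := by
        rw [← hp, qstar_mul, qstar_para hpk]
      rw [hqξ]
      have : qstar κ.2 * p * s - qstar κ.2 * ((p - 1) * s) = qstar κ.2 * s := by noncomm_ring
      rw [this, hsdef, mul_inv_cancel₀ (qstar_ne_zero hη)]
    · show (κ.1 * 1 + (p - 1) * s * 0, κ.2 * 1 + s * 0) = κ
      rw [mul_one, mul_zero, add_zero, mul_one, mul_zero, add_zero]

end CliffordAux

/-- Clifford matrices preserve quaternionic spinors under matrix-vector multiplication,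
and the action on spinors is transitive. -/
theorem clifford_action_spinors :
    (∀ (A : Matrix (Fin 2) (Fin 2) ℍ[ℝ]) (κ : ℍ[ℝ] × ℍ[ℝ]),
      IsClifford A → IsSpinor κ → IsSpinor (mact A κ)) ∧
    (∀ κ₁ κ₂ : ℍ[ℝ] × ℍ[ℝ], IsSpinor κ₁ → IsSpinor κ₂ →
      ∃ A : Matrix (Fin 2) (Fin 2) ℍ[ℝ], IsClifford A ∧ mact A κ₁ = κ₂) := by
  constructor
  · exact fun A κ hA hκ => CliffordAux.spinor_mact A κ hA hκ
  · intro κ₁ κ₂ h1 h2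
    obtain ⟨S, hS, hSm⟩ := CliffordAux.to_std κ₁ h1
    obtain ⟨T, hT, hTm⟩ := CliffordAux.from_std κ₂ h2
    exact ⟨T * S, CliffordAux.mul_clifford hT hS, by rw [CliffordAux.mact_mul, hSm, hTm]⟩
end
end

section
/- Let κ₁, κ₂, κ₃ be quaternionic spinors such that λ_{mn} := {κ_m, κ_n} is nonzero for all m ≠ n. Then the product λ₁₂ λ₃₂⁻¹ λ₃₁ is a paravector. (Geometrically, by the paper's Theorem 2 this says that for any three spin-decorated horospheres in H⁴ with pairwise distinct centres, the triple product of lambda lengths λ₁₂ λ₃₂⁻¹ λ₃₁ lies in $ℝ³.) -/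
open Quaternion

noncomputable section

lemma key_poly (x1 y1 x2 y2 x3 y3 : ℍ[ℝ])
    (hc1 : (x1 * star y1).imK = 0) (hc2 : (x2 * star y2).imK = 0)
    (hc3 : (x3 * star y3).imK = 0) :
    ((qstar x1 * y2 - qstar y1 * x2) * star (qstar x3 * y2 - qstar y3 * x2) *
      (qstar x3 * y1 - qstar y3 * x1)).imK = 0 := by
  simp only [Quaternion.imK_mul, Quaternion.re_mul, Quaternion.imI_mul, Quaternion.imJ_mul,
    Quaternion.re_sub, Quaternion.imI_sub, Quaternion.imJ_sub, Quaternion.imK_sub,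
    Quaternion.re_star, Quaternion.imI_star, Quaternion.imJ_star, Quaternion.imK_star,
    qstar_re, qstar_imI, qstar_imJ, qstar_imK] at hc1 hc2 hc3 ⊢
  linear_combination
    (-x2.re*x2.re*y3.re*y3.re - x2.re*x2.re*y3.imI*y3.imI - x2.re*x2.re*y3.imJ*y3.imJ - x2.re*x2.re*y3.imK*y3.imK + 2*x2.re*y2.re*x3.re*y3.re + 2*x2.re*y2.re*x3.imI*y3.imI + 2*x2.re*y2.re*x3.imJ*y3.imJ + 2*x2.re*y2.re*x3.imK*y3.imK + 2*x2.re*y2.imI*x3.re*y3.imI - 2*x2.re*y2.imI*x3.imI*y3.re + 2*x2.re*y2.imI*x3.imJ*y3.imK - 2*x2.re*y2.imI*x3.imK*y3.imJ + 2*x2.re*y2.imJ*x3.re*y3.imJ - 2*x2.re*y2.imJ*x3.imI*y3.imK - 2*x2.re*y2.imJ*x3.imJ*y3.re + 2*x2.re*y2.imJ*x3.imK*y3.imI - 2*x2.re*y2.imK*x3.re*y3.imK - 2*x2.re*y2.imK*x3.imI*y3.imJ + 2*x2.re*y2.imK*x3.imJ*y3.imI + 2*x2.re*y2.imK*x3.imK*y3.re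 - x2.imI*x2.imI*y3.re*y3.re - x2.imI*x2.imI*y3.imI*y3.imI - x2.imI*x2.imI*y3.imJ*y3.imJ - x2.imI*x2.imI*y3.imK*y3.imK - 2*x2.imI*y2.re*x3.re*y3.imI + 2*x2.imI*y2.re*x3.imI*y3.re - 2*x2.imI*y2.re*x3.imJ*y3.imK + 2*x2.imI*y2.re*x3.imK*y3.imJ + 2*x2.imI*y2.imI*x3.re*y3.re + 2*x2.imI*y2.imI*x3.imI*y3.imI + 2*x2.imI*y2.imI*x3.imJ*y3.imJ + 2*x2.imI*y2.imI*x3.imK*y3.imK - 2*x2.imI*y2.imJ*x3.re*y3.imK - 2*x2.imI*y2.imJ*x3.imI*y3.imJ + 2*x2.imI*y2.imJ*x3.imJ*y3.imI + 2*x2.imI*y2.imJ*x3.imK*y3.re - 2*x2.imI*y2.imK*x3.re*y3.imJ + 2*x2.imI*y2.imK*x3.imI*y3.imK + 2*x2.imI*y2.imK*x3.imJ*y3.re - 2*x2.imI*y2.imK*x3.imK*y3.imI - x2.imJ*x2.imJ*y3.re*y3.re - x2.imJ*x2.imJ*y3.imI*y3.imI - x2.imJ*x2.imJ*y3.imJ*y3.imJ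 - x2.imJ*x2.imJ*y3.imK*y3.imK - 2*x2.imJ*y2.re*x3.re*y3.imJ + 2*x2.imJ*y2.re*x3.imI*y3.imK + 2*x2.imJ*y2.re*x3.imJ*y3.re - 2*x2.imJ*y2.re*x3.imK*y3.imI + 2*x2.imJ*y2.imI*x3.re*y3.imK + 2*x2.imJ*y2.imI*x3.imI*y3.imJ - 2*x2.imJ*y2.imI*x3.imJ*y3.imI - 2*x2.imJ*y2.imI*x3.imK*y3.re + 2*x2.imJ*y2.imJ*x3.re*y3.re + 2*x2.imJ*y2.imJ*x3.imI*y3.imI + 2*x2.imJ*y2.imJ*x3.imJ*y3.imJ + 2*x2.imJ*y2.imJ*x3.imK*y3.imK + 2*x2.imJ*y2.imK*x3.re*y3.imI - 2*x2.imJ*y2.imK*x3.imI*y3.re + 2*x2.imJ*y2.imK*x3.imJ*y3.imK - 2*x2.imJ*y2.imK*x3.imK*y3.imJ - x2.imK*x2.imK*y3.re*y3.re - x2.imK*x2.imK*y3.imI*y3.imI - x2.imK*x2.imK*y3.imJ*y3.imJ - x2.imK*x2.imK*y3.imK*y3.imK + 2*x2.imK*y2.re*x3.re*y3.imK + 2*x2.imK*y2.re*x3.imI*y3.imJ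 - 2*x2.imK*y2.re*x3.imJ*y3.imI - 2*x2.imK*y2.re*x3.imK*y3.re + 2*x2.imK*y2.imI*x3.re*y3.imJ - 2*x2.imK*y2.imI*x3.imI*y3.imK - 2*x2.imK*y2.imI*x3.imJ*y3.re + 2*x2.imK*y2.imI*x3.imK*y3.imI - 2*x2.imK*y2.imJ*x3.re*y3.imI + 2*x2.imK*y2.imJ*x3.imI*y3.re - 2*x2.imK*y2.imJ*x3.imJ*y3.imK + 2*x2.imK*y2.imJ*x3.imK*y3.imJ + 2*x2.imK*y2.imK*x3.re*y3.re + 2*x2.imK*y2.imK*x3.imI*y3.imI + 2*x2.imK*y2.imK*x3.imJ*y3.imJ + 2*x2.imK*y2.imK*x3.imK*y3.imK - y2.re*y2.re*x3.re*x3.re - y2.re*y2.re*x3.imI*x3.imI - y2.re*y2.re*x3.imJ*x3.imJ - y2.re*y2.re*x3.imK*x3.imK - y2.imI*y2.imI*x3.re*x3.re - y2.imI*y2.imI*x3.imI*x3.imI - y2.imI*y2.imI*x3.imJ*x3.imJ - y2.imI*y2.imI*x3.imK*x3.imK - y2.imJ*y2.imJ*x3.re*x3.re - y2.imJ*y2.imJ*x3.imI*x3.imI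 - y2.imJ*y2.imJ*x3.imJ*x3.imJ - y2.imJ*y2.imJ*x3.imK*x3.imK - y2.imK*y2.imK*x3.re*x3.re - y2.imK*y2.imK*x3.imI*x3.imI - y2.imK*y2.imK*x3.imJ*x3.imJ - y2.imK*y2.imK*x3.imK*x3.imK) * hc1 +
    (-x1.re*x1.re*y3.re*y3.re - x1.re*x1.re*y3.imI*y3.imI - x1.re*x1.re*y3.imJ*y3.imJ - x1.re*x1.re*y3.imK*y3.imK + 2*x1.re*y1.re*x3.re*y3.re + 2*x1.re*y1.re*x3.imI*y3.imI + 2*x1.re*y1.re*x3.imJ*y3.imJ + 2*x1.re*y1.re*x3.imK*y3.imK + 2*x1.re*y1.imI*x3.re*y3.imI - 2*x1.re*y1.imI*x3.imI*y3.re + 2*x1.re*y1.imI*x3.imJ*y3.imK - 2*x1.re*y1.imI*x3.imK*y3.imJ + 2*x1.re*y1.imJ*x3.re*y3.imJ - 2*x1.re*y1.imJ*x3.imI*y3.imK - 2*x1.re*y1.imJ*x3.imJ*y3.re + 2*x1.re*y1.imJ*x3.imK*y3.imI - x1.imI*x1.imI*y3.re*y3.re - x1.imI*x1.imI*y3.imI*y3.imI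 - x1.imI*x1.imI*y3.imJ*y3.imJ - x1.imI*x1.imI*y3.imK*y3.imK - 2*x1.imI*y1.re*x3.re*y3.imI + 2*x1.imI*y1.re*x3.imI*y3.re - 2*x1.imI*y1.re*x3.imJ*y3.imK + 2*x1.imI*y1.re*x3.imK*y3.imJ + 2*x1.imI*y1.imI*x3.re*y3.re + 2*x1.imI*y1.imI*x3.imI*y3.imI + 2*x1.imI*y1.imI*x3.imJ*y3.imJ + 2*x1.imI*y1.imI*x3.imK*y3.imK - 2*x1.imI*y1.imK*x3.re*y3.imJ + 2*x1.imI*y1.imK*x3.imI*y3.imK + 2*x1.imI*y1.imK*x3.imJ*y3.re - 2*x1.imI*y1.imK*x3.imK*y3.imI - x1.imJ*x1.imJ*y3.re*y3.re - x1.imJ*x1.imJ*y3.imI*y3.imI - x1.imJ*x1.imJ*y3.imJ*y3.imJ - x1.imJ*x1.imJ*y3.imK*y3.imK - 2*x1.imJ*y1.re*x3.re*y3.imJ + 2*x1.imJ*y1.re*x3.imI*y3.imK + 2*x1.imJ*y1.re*x3.imJ*y3.re - 2*x1.imJ*y1.re*x3.imK*y3.imI + 2*x1.imJ*y1.imJ*x3.re*y3.re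 + 2*x1.imJ*y1.imJ*x3.imI*y3.imI + 2*x1.imJ*y1.imJ*x3.imJ*y3.imJ + 2*x1.imJ*y1.imJ*x3.imK*y3.imK + 2*x1.imJ*y1.imK*x3.re*y3.imI - 2*x1.imJ*y1.imK*x3.imI*y3.re + 2*x1.imJ*y1.imK*x3.imJ*y3.imK - 2*x1.imJ*y1.imK*x3.imK*y3.imJ - x1.imK*x1.imK*y3.re*y3.re - x1.imK*x1.imK*y3.imI*y3.imI - x1.imK*x1.imK*y3.imJ*y3.imJ - x1.imK*x1.imK*y3.imK*y3.imK + 2*x1.imK*y1.imI*x3.re*y3.imJ - 2*x1.imK*y1.imI*x3.imI*y3.imK - 2*x1.imK*y1.imI*x3.imJ*y3.re + 2*x1.imK*y1.imI*x3.imK*y3.imI - 2*x1.imK*y1.imJ*x3.re*y3.imI + 2*x1.imK*y1.imJ*x3.imI*y3.re - 2*x1.imK*y1.imJ*x3.imJ*y3.imK + 2*x1.imK*y1.imJ*x3.imK*y3.imJ + 2*x1.imK*y1.imK*x3.re*y3.re + 2*x1.imK*y1.imK*x3.imI*y3.imI + 2*x1.imK*y1.imK*x3.imJ*y3.imJ +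 2*x1.imK*y1.imK*x3.imK*y3.imK - y1.re*y1.re*x3.re*x3.re - y1.re*y1.re*x3.imI*x3.imI - y1.re*y1.re*x3.imJ*x3.imJ - y1.re*y1.re*x3.imK*x3.imK - y1.imI*y1.imI*x3.re*x3.re - y1.imI*y1.imI*x3.imI*x3.imI - y1.imI*y1.imI*x3.imJ*x3.imJ - y1.imI*y1.imI*x3.imK*x3.imK - y1.imJ*y1.imJ*x3.re*x3.re - y1.imJ*y1.imJ*x3.imI*x3.imI - y1.imJ*y1.imJ*x3.imJ*x3.imJ - y1.imJ*y1.imJ*x3.imK*x3.imK - y1.imK*y1.imK*x3.re*x3.re - y1.imK*y1.imK*x3.imI*x3.imI - y1.imK*y1.imK*x3.imJ*x3.imJ - y1.imK*y1.imK*x3.imK*x3.imK) * hc2 +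
    (-x1.re*x1.re*y2.re*y2.re - x1.re*x1.re*y2.imI*y2.imI - x1.re*x1.re*y2.imJ*y2.imJ - x1.re*x1.re*y2.imK*y2.imK + 2*x1.re*y1.re*x2.re*y2.re + 2*x1.re*y1.re*x2.imI*y2.imI + 2*x1.re*y1.re*x2.imJ*y2.imJ + 2*x1.re*y1.re*x2.imK*y2.imK + 2*x1.re*y1.imI*x2.re*y2.imI - 2*x1.re*y1.imI*x2.imI*y2.re + 2*x1.re*y1.imI*x2.imJ*y2.imK - 2*x1.re*y1.imI*x2.imK*y2.imJ + 2*x1.re*y1.imJ*x2.re*y2.imJ - 2*x1.re*y1.imJ*x2.imI*y2.imK - 2*x1.re*y1.imJ*x2.imJ*y2.re + 2*x1.re*y1.imJ*x2.imK*y2.imI - x1.imI*x1.imI*y2.re*y2.re - x1.imI*x1.imI*y2.imI*y2.imI - x1.imI*x1.imI*y2.imJ*y2.imJ - x1.imI*x1.imI*y2.imK*y2.imK - 2*x1.imI*y1.re*x2.re*y2.imI + 2*x1.imI*y1.re*x2.imI*y2.re - 2*x1.imI*y1.re*x2.imJ*y2.imK + 2*x1.imI*y1.re*x2.imK*y2.imJ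 + 2*x1.imI*y1.imI*x2.re*y2.re + 2*x1.imI*y1.imI*x2.imI*y2.imI + 2*x1.imI*y1.imI*x2.imJ*y2.imJ + 2*x1.imI*y1.imI*x2.imK*y2.imK - 2*x1.imI*y1.imK*x2.re*y2.imJ + 2*x1.imI*y1.imK*x2.imI*y2.imK + 2*x1.imI*y1.imK*x2.imJ*y2.re - 2*x1.imI*y1.imK*x2.imK*y2.imI - x1.imJ*x1.imJ*y2.re*y2.re - x1.imJ*x1.imJ*y2.imI*y2.imI - x1.imJ*x1.imJ*y2.imJ*y2.imJ - x1.imJ*x1.imJ*y2.imK*y2.imK - 2*x1.imJ*y1.re*x2.re*y2.imJ + 2*x1.imJ*y1.re*x2.imI*y2.imK + 2*x1.imJ*y1.re*x2.imJ*y2.re - 2*x1.imJ*y1.re*x2.imK*y2.imI + 2*x1.imJ*y1.imJ*x2.re*y2.re + 2*x1.imJ*y1.imJ*x2.imI*y2.imI + 2*x1.imJ*y1.imJ*x2.imJ*y2.imJ + 2*x1.imJ*y1.imJ*x2.imK*y2.imK + 2*x1.imJ*y1.imK*x2.re*y2.imI - 2*x1.imJ*y1.imK*x2.imI*y2.re +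 2*x1.imJ*y1.imK*x2.imJ*y2.imK - 2*x1.imJ*y1.imK*x2.imK*y2.imJ - x1.imK*x1.imK*y2.re*y2.re - x1.imK*x1.imK*y2.imI*y2.imI - x1.imK*x1.imK*y2.imJ*y2.imJ - x1.imK*x1.imK*y2.imK*y2.imK + 2*x1.imK*y1.imI*x2.re*y2.imJ - 2*x1.imK*y1.imI*x2.imI*y2.imK - 2*x1.imK*y1.imI*x2.imJ*y2.re + 2*x1.imK*y1.imI*x2.imK*y2.imI - 2*x1.imK*y1.imJ*x2.re*y2.imI + 2*x1.imK*y1.imJ*x2.imI*y2.re - 2*x1.imK*y1.imJ*x2.imJ*y2.imK + 2*x1.imK*y1.imJ*x2.imK*y2.imJ + 2*x1.imK*y1.imK*x2.re*y2.re + 2*x1.imK*y1.imK*x2.imI*y2.imI + 2*x1.imK*y1.imK*x2.imJ*y2.imJ + 2*x1.imK*y1.imK*x2.imK*y2.imK - y1.re*y1.re*x2.re*x2.re - y1.re*y1.re*x2.imI*x2.imI - y1.re*y1.re*x2.imJ*x2.imJ - y1.re*y1.re*x2.imK*x2.imK - y1.imI*y1.imI*x2.re*x2.re - y1.imI*y1.imI*x2.imI*x2.imI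 - y1.imI*y1.imI*x2.imJ*x2.imJ - y1.imI*y1.imI*x2.imK*x2.imK - y1.imJ*y1.imJ*x2.re*x2.re - y1.imJ*y1.imJ*x2.imI*x2.imI - y1.imJ*y1.imJ*x2.imJ*x2.imJ - y1.imJ*y1.imJ*x2.imK*x2.imK - y1.imK*y1.imK*x2.re*x2.re - y1.imK*y1.imK*x2.imI*x2.imI - y1.imK*y1.imK*x2.imJ*x2.imJ - y1.imK*y1.imK*x2.imK*x2.imK) * hc3

/-- Triangle holonomy: for quaternionic spinors `κ₁, κ₂, κ₃` with all pairwise brackets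
(lambda lengths) `λ_{mn} = {κ_m, κ_n}` nonzero, the product `λ₁₂ λ₃₂⁻¹ λ₃₁` is a
paravector. -/
theorem triangle_holonomy (κ₁ κ₂ κ₃ : ℍ[ℝ] × ℍ[ℝ])
    (h₁ : IsSpinor κ₁) (h₂ : IsSpinor κ₂) (h₃ : IsSpinor κ₃)
    (hne : ∀ m n : Fin 3, m ≠ n → bracket (![κ₁, κ₂, κ₃] m) (![κ₁, κ₂, κ₃] n) ≠ 0) :
    IsParavector (bracket κ₁ κ₂ * (bracket κ₃ κ₂)⁻¹ * bracket κ₃ κ₁) := by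
  have h32 : bracket κ₃ κ₂ ≠ 0 := by
    have := hne 2 1 (by decide)
    simpa using this
  unfold IsParavector
  rw [Quaternion.inv_def, mul_smul_comm, smul_mul_assoc, Quaternion.imK_smul]
  have key := key_poly κ₁.1 κ₁.2 κ₂.1 κ₂.2 κ₃.1 κ₃.2 h₁.2 h₂.2 h₃.2
  simp only [bracket] at key ⊢
  rw [key, smul_zero]
end
end
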